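/- Let ℓ: ℝ → ℝ₊ be a loss function with ℓ(0)=0, ℓ even, nondecreasing and convex on ℝ₊. For any random variables ξ, η and any A > 0: |E ℓ(ξ) − E ℓ(η)| ≤ 4ℓ(A)·Δ(ξ,η) + E[ℓ(ξ)·1{|ξ|≥A}] + E[ℓ(η)·1{|η|≥A}], where Δ(ξ,η) := sup_{x∈ℝ}|P(ξ≤x) − P(η≤x)|. -/

import Mathlib

open MeasureTheory

section AuxStmt4

open Set Filter Topology

variable {P Q : Measure ℝ} [IsProbabilityMeasure P] [IsProbabilityMeasure Q] {D : ℝ}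

private lemma stmt4_aux_diff (P : Measure ℝ) [IsProbabilityMeasure P] {s t : Set ℝ}
    (hst : s ⊆ t) (hs : MeasurableSet s) :
    (P (t \ s)).toReal = (P t).toReal - (P s).toReal := by
  rw [measure_diff hst hs.nullMeasurableSet (measure_ne_top P s),
    ENNReal.toReal_sub_of_le (measure_mono hst) (measure_ne_top P t)]

private lemma stmt4_aux_abs (a b c d D : ℝ) (h1 : |a - c| ≤ D) (h2 : |b - d| ≤ D) :
    |(a - b) - (c - d)| ≤ 2 * D := by
  have : (a - b) - (c - d) = (a - c) - (b - d) := by ring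
  rw [this]
  calc |(a - c) - (b - d)| ≤ |a - c| + |b - d| := abs_sub _ _
    _ ≤ 2 * D := by linarith

private lemma stmt4_aux_Iio
    (h : ∀ x : ℝ, |(P (Iic x)).toReal - (Q (Iic x)).toReal| ≤ D) (x : ℝ) :
    |(P (Iio x)).toReal - (Q (Iio x)).toReal| ≤ D := by
  have hU : Iio x = ⋃ n : ℕ, Iic (x - 1 / (n + 1)) := by
    ext y
    simp only [mem_Iio, mem_iUnion, mem_Iic]
    constructor
    · intro hy
      obtain ⟨n, hn⟩ := exists_nat_one_div_lt (sub_pos.mpr hy)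
      exact ⟨n, by linarith⟩
    · rintro ⟨n, hn⟩
      have : (0:ℝ) < 1 / (n + 1) := by positivity
      linarith
  have hmono : Monotone fun n : ℕ => Iic (x - 1 / ((n:ℝ) + 1)) := by
    intro n m hnm
    apply Iic_subset_Iic.mpr
    have h1 : (0:ℝ) < (n:ℝ) + 1 := by positivity
    have : 1 / ((m:ℝ) + 1) ≤ 1 / ((n:ℝ) + 1) := by
      apply one_div_le_one_div_of_le h1
      have : ((n:ℝ)) ≤ (m:ℝ) := Nat.cast_le.mpr hnm
      linarith
    linarith
  have hP : Tendsto (fun n : ℕ => (P (Iic (x - 1 / ((n:ℝ) + 1)))).toReal) atTop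
      (𝓝 ((P (Iio x)).toReal)) := by
    rw [hU]
    exact (ENNReal.tendsto_toReal (measure_ne_top P _)).comp
      (tendsto_measure_iUnion_atTop hmono)
  have hQ : Tendsto (fun n : ℕ => (Q (Iic (x - 1 / ((n:ℝ) + 1)))).toReal) atTop
      (𝓝 ((Q (Iio x)).toReal)) := by
    rw [hU]
    exact (ENNReal.tendsto_toReal (measure_ne_top Q _)).comp
      (tendsto_measure_iUnion_atTop hmono)
  exact le_of_tendsto ((hP.sub hQ).abs) (Eventually.of_forall fun n => h _)

private lemma stmt4_aux_Ioc
    (h : ∀ x : ℝ, |(P (Iic x)).toReal - (Q (Iic x)).toReal| ≤ D) (a b : ℝ) :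
    |(P (Ioc a b)).toReal - (Q (Ioc a b)).toReal| ≤ 2 * D := by
  have hD0 : 0 ≤ D := le_trans (abs_nonneg _) (h 0)
  rcases le_or_gt a b with hab | hab
  · have heq : Ioc a b = Iic b \ Iic a := by
      ext y; simp [mem_Ioc, mem_diff, and_comm, not_le]
    rw [heq, stmt4_aux_diff P (Iic_subset_Iic.mpr hab) measurableSet_Iic,
      stmt4_aux_diff Q (Iic_subset_Iic.mpr hab) measurableSet_Iic]
    exact stmt4_aux_abs _ _ _ _ _ (h b) (h a)
  · rw [Ioc_eq_empty (not_lt.mpr hab.le)]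
    simpa using by linarith

private lemma stmt4_aux_Ico
    (h : ∀ x : ℝ, |(P (Iic x)).toReal - (Q (Iic x)).toReal| ≤ D) (a b : ℝ) :
    |(P (Ico a b)).toReal - (Q (Ico a b)).toReal| ≤ 2 * D := by
  have hD0 : 0 ≤ D := le_trans (abs_nonneg _) (h 0)
  have h' := stmt4_aux_Iio h
  rcases le_or_gt a b with hab | hab
  · have heq : Ico a b = Iio b \ Iio a := by
      ext y; simp [mem_Ico, mem_diff, and_comm, not_lt]
    rw [heq, stmt4_aux_diff P (Iio_subset_Iio hab) measurableSet_Iio,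
      stmt4_aux_diff Q (Iio_subset_Iio hab) measurableSet_Iio]
    exact stmt4_aux_abs _ _ _ _ _ (h' b) (h' a)
  · rw [Ico_eq_empty (not_lt.mpr hab.le)]
    simpa using by linarith

private lemma stmt4_aux_Ioo
    (h : ∀ x : ℝ, |(P (Iic x)).toReal - (Q (Iic x)).toReal| ≤ D) (a b : ℝ) :
    |(P (Ioo a b)).toReal - (Q (Ioo a b)).toReal| ≤ 2 * D := by
  have hD0 : 0 ≤ D := le_trans (abs_nonneg _) (h 0)
  have h' := stmt4_aux_Iio h
  rcases lt_or_ge a b with hab | hab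
  · have heq : Ioo a b = Iio b \ Iic a := by
      ext y; simp [mem_Ioo, mem_diff, and_comm, not_le]
    have hsub : Iic a ⊆ Iio b := Iic_subset_Iio.mpr hab
    rw [heq, stmt4_aux_diff P hsub measurableSet_Iic,
      stmt4_aux_diff Q hsub measurableSet_Iic]
    exact stmt4_aux_abs _ _ _ _ _ (h' b) (h a)
  · rw [Ioo_eq_empty (not_lt.mpr hab)]
    simpa using by linarith

private lemma stmt4_aux_pointwise
    (h : ∀ x : ℝ, |(P (Iic x)).toReal - (Q (Iic x)).toReal| ≤ D)
    (loss : ℝ → ℝ) (h0 : loss 0 = 0) (heven : ∀ u, loss (-u) = loss u)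
    (hmono : MonotoneOn loss (Set.Ici (0 : ℝ)))
    (A t : ℝ) (ht : 0 < t) :
    |(P {x | |x| < A ∧ t < loss x}).toReal - (Q {x | |x| < A ∧ t < loss x}).toReal|
      ≤ 4 * D := by
  have hD0 : 0 ≤ D := le_trans (abs_nonneg _) (h 0)
  have habs : ∀ x : ℝ, loss x = loss |x| := by
    intro x
    rcases le_or_gt 0 x with hx | hx
    · rw [abs_of_nonneg hx]
    · rw [abs_of_neg hx]; exact (heven x).symm
  set S : Set ℝ := {u | 0 ≤ u ∧ t < loss u} with hSdef
  have hupper : ∀ u v, u ∈ S → u ≤ v → v ∈ S := by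
    intro u v hu huv
    exact ⟨hu.1.trans huv, lt_of_lt_of_le hu.2 (hmono hu.1 (hu.1.trans huv) huv)⟩
  by_cases hS : S.Nonempty
  · have hbdd : BddBelow S := ⟨0, fun u hu => hu.1⟩
    set c := sInf S with hcdef
    have hc0 : 0 ≤ c := le_csInf hS fun u hu => hu.1
    by_cases hcS : c ∈ S
    · -- S = [c, ∞), T = Ioc (-A) (-c) ∪ Ico c A
      have hcpos : 0 < c := by
        rcases hc0.lt_or_eq with h' | h'
        · exact h'
        · exfalso; have h2 := hcS.2; rw [← h', h0] at h2; linarith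
      have hmem : ∀ u : ℝ, 0 ≤ u → (u ∈ S ↔ c ≤ u) :=
        fun u hu => ⟨fun h' => csInf_le hbdd h', fun h' => hupper c u hcS h'⟩
      have hT : {x : ℝ | |x| < A ∧ t < loss x}
          = Set.Ioc (-A) (-c) ∪ Set.Ico c A := by
        ext x
        simp only [Set.mem_setOf_eq, Set.mem_union, Set.mem_Ioc, Set.mem_Ico]
        constructor
        · rintro ⟨hxA, hxl⟩
          have hxS : c ≤ |x| := (hmem |x| (abs_nonneg x)).mp ⟨abs_nonneg x, by rwa [← habs]⟩
          rcases le_or_gt 0 x with hx | hx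
          · right; rw [abs_of_nonneg hx] at hxS hxA; exact ⟨hxS, hxA⟩
          · left; rw [abs_of_neg hx] at hxS hxA; constructor <;> linarith
        · rintro (⟨h1, h2⟩ | ⟨h1, h2⟩)
          · have hx : |x| < A ∧ c ≤ |x| := by
              rw [abs_of_neg (by linarith : x < 0)]; constructor <;> linarith
            exact ⟨hx.1, by rw [habs]; exact ((hmem |x| (abs_nonneg x)).mpr hx.2).2⟩
          · have hx : |x| < A ∧ c ≤ |x| := by
              rw [abs_of_nonneg (by linarith : 0 ≤ x)]; exact ⟨h2, h1⟩
            exact ⟨hx.1, by rw [habs]; exact ((hmem |x| (abs_nonneg x)).mpr hx.2).2⟩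
      have hdisj : Disjoint (Set.Ioc (-A) (-c)) (Set.Ico c A) := by
        rw [Set.disjoint_left]
        rintro x ⟨_, h1⟩ ⟨h2, _⟩
        linarith
      rw [hT, measure_union hdisj measurableSet_Ico,
        measure_union hdisj measurableSet_Ico,
        ENNReal.toReal_add (measure_ne_top P _) (measure_ne_top P _),
        ENNReal.toReal_add (measure_ne_top Q _) (measure_ne_top Q _)]
      have h1 := stmt4_aux_Ioc h (-A) (-c)
      have h2 := stmt4_aux_Ico h c A
      calc |((P (Set.Ioc (-A) (-c))).toReal + (P (Set.Ico c A)).toReal)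
            - ((Q (Set.Ioc (-A) (-c))).toReal + (Q (Set.Ico c A)).toReal)|
          ≤ |(P (Set.Ioc (-A) (-c))).toReal - (Q (Set.Ioc (-A) (-c))).toReal|
            + |(P (Set.Ico c A)).toReal - (Q (Set.Ico c A)).toReal| := by
            have : ((P (Set.Ioc (-A) (-c))).toReal + (P (Set.Ico c A)).toReal)
                - ((Q (Set.Ioc (-A) (-c))).toReal + (Q (Set.Ico c A)).toReal)
                = ((P (Set.Ioc (-A) (-c))).toReal - (Q (Set.Ioc (-A) (-c))).toReal)
                  + ((P (Set.Ico c A)).toReal - (Q (Set.Ico c A)).toReal) := by ring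
            rw [this]; exact abs_add_le _ _
        _ ≤ 4 * D := by linarith
    · -- S = (c, ∞), T = Ioo (-A) (-c) ∪ Ioo c A
      have hmem : ∀ u : ℝ, u ∈ S ↔ c < u := by
        intro u
        constructor
        · intro hu
          rcases (csInf_le hbdd hu).lt_or_eq with h' | h'
          · exact h'
          · exact absurd (show c ∈ S by rw [hcdef, h']; exact hu) hcS
        · intro hu
          obtain ⟨s, hs, hsu⟩ := exists_lt_of_csInf_lt hS hu
          exact hupper s u hs hsu.le
      have hT : {x : ℝ | |x| < A ∧ t < loss x}
          = Set.Ioo (-A) (-c) ∪ Set.Ioo c A := by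
        ext x
        simp only [Set.mem_setOf_eq, Set.mem_union, Set.mem_Ioo]
        constructor
        · rintro ⟨hxA, hxl⟩
          have hxS : c < |x| := (hmem |x|).mp ⟨abs_nonneg x, by rwa [← habs]⟩
          rcases le_or_gt 0 x with hx | hx
          · right; rw [abs_of_nonneg hx] at hxS hxA; exact ⟨hxS, hxA⟩
          · left; rw [abs_of_neg hx] at hxS hxA; constructor <;> linarith
        · rintro (⟨h1, h2⟩ | ⟨h1, h2⟩)
          · have hx : |x| < A ∧ c < |x| := by
              rw [abs_of_neg (by linarith : x < 0)]; constructor <;> linarith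
            exact ⟨hx.1, by rw [habs]; exact ((hmem |x|).mpr hx.2).2⟩
          · have hx : |x| < A ∧ c < |x| := by
              rw [abs_of_nonneg (by linarith : 0 ≤ x)]; exact ⟨h2, h1⟩
            exact ⟨hx.1, by rw [habs]; exact ((hmem |x|).mpr hx.2).2⟩
      have hdisj : Disjoint (Set.Ioo (-A) (-c)) (Set.Ioo c A) := by
        rw [Set.disjoint_left]
        rintro x ⟨_, h1⟩ ⟨h2, _⟩
        linarith
      rw [hT, measure_union hdisj measurableSet_Ioo,
        measure_union hdisj measurableSet_Ioo,
        ENNReal.toReal_add (measure_ne_top P _) (measure_ne_top P _),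
        ENNReal.toReal_add (measure_ne_top Q _) (measure_ne_top Q _)]
      have h1 := stmt4_aux_Ioo h (-A) (-c)
      have h2 := stmt4_aux_Ioo h c A
      calc |((P (Set.Ioo (-A) (-c))).toReal + (P (Set.Ioo c A)).toReal)
            - ((Q (Set.Ioo (-A) (-c))).toReal + (Q (Set.Ioo c A)).toReal)|
          ≤ |(P (Set.Ioo (-A) (-c))).toReal - (Q (Set.Ioo (-A) (-c))).toReal|
            + |(P (Set.Ioo c A)).toReal - (Q (Set.Ioo c A)).toReal| := by
            have : ((P (Set.Ioo (-A) (-c))).toReal + (P (Set.Ioo c A)).toReal)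
                - ((Q (Set.Ioo (-A) (-c))).toReal + (Q (Set.Ioo c A)).toReal)
                = ((P (Set.Ioo (-A) (-c))).toReal - (Q (Set.Ioo (-A) (-c))).toReal)
                  + ((P (Set.Ioo c A)).toReal - (Q (Set.Ioo c A)).toReal) := by ring
            rw [this]; exact abs_add_le _ _
        _ ≤ 4 * D := by linarith
  · have hT : {x : ℝ | |x| < A ∧ t < loss x} = ∅ := by
      ext x
      simp only [Set.mem_setOf_eq, Set.mem_empty_iff_false, iff_false, not_and]
      intro _ hxl
      exact hS ⟨|x|, abs_nonneg x, by rwa [← habs]⟩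
    rw [hT]
    simpa using by linarith

private lemma stmt4_master
    (h : ∀ x : ℝ, |(P (Iic x)).toReal - (Q (Iic x)).toReal| ≤ D)
    (loss : ℝ → ℝ) (hnonneg : ∀ u, 0 ≤ loss u) (h0 : loss 0 = 0)
    (heven : ∀ u, loss (-u) = loss u)
    (hmono : MonotoneOn loss (Set.Ici (0 : ℝ)))
    (hm : Measurable loss)
    (hintP : Integrable loss P) (hintQ : Integrable loss Q)
    (A : ℝ) (hA : 0 < A) :
    |(∫ x, loss x ∂P) - ∫ x, loss x ∂Q|
      ≤ 4 * loss A * D + (∫ x in {x : ℝ | A ≤ |x|}, loss x ∂P)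
        + ∫ x in {x : ℝ | A ≤ |x|}, loss x ∂Q := by
  have hD0 : 0 ≤ D := le_trans (abs_nonneg _) (h 0)
  have hs : MeasurableSet {x : ℝ | A ≤ |x|} :=
    measurableSet_le measurable_const measurable_id.abs
  have hmA : MeasurableSet {x : ℝ | |x| < A} :=
    measurableSet_lt measurable_id.abs measurable_const
  have hsc : {x : ℝ | A ≤ |x|}ᶜ = {x : ℝ | |x| < A} := by
    ext x; simp [not_le]
  set g : ℝ → ℝ := Set.indicator {x : ℝ | |x| < A} loss with hgdef
  have hgP : ∫ x, g x ∂P = ∫ x in {x : ℝ | |x| < A}, loss x ∂P := integral_indicator hmA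
  have hgQ : ∫ x, g x ∂Q = ∫ x in {x : ℝ | |x| < A}, loss x ∂Q := integral_indicator hmA
  have hsplitP : (∫ x in {x : ℝ | A ≤ |x|}, loss x ∂P)
      + ∫ x in {x : ℝ | |x| < A}, loss x ∂P = ∫ x, loss x ∂P := by
    rw [← hsc]; exact integral_add_compl hs hintP
  have hsplitQ : (∫ x in {x : ℝ | A ≤ |x|}, loss x ∂Q)
      + ∫ x in {x : ℝ | |x| < A}, loss x ∂Q = ∫ x, loss x ∂Q := by
    rw [← hsc]; exact integral_add_compl hs hintQ
  have htP : 0 ≤ ∫ x in {x : ℝ | A ≤ |x|}, loss x ∂P :=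
    setIntegral_nonneg hs fun x _ => hnonneg x
  have htQ : 0 ≤ ∫ x in {x : ℝ | A ≤ |x|}, loss x ∂Q :=
    setIntegral_nonneg hs fun x _ => hnonneg x
  -- core estimate on the truncated parts
  have hcore : |(∫ x, g x ∂P) - ∫ x, g x ∂Q| ≤ 4 * loss A * D := by
    set L := loss A with hLdef
    have hL0 : 0 ≤ L := hnonneg A
    have hgint1 : Integrable g P := hintP.indicator hmA
    have hgint2 : Integrable g Q := hintQ.indicator hmA
    have hgnn : ∀ x, 0 ≤ g x := fun x =>
      Set.indicator_nonneg (fun y _ => hnonneg y) x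
    have hlayP : ∫ x, g x ∂P = ∫ t in Set.Ioi 0, (P {a : ℝ | t < g a}).toReal :=
      hgint1.integral_eq_integral_meas_lt (Eventually.of_forall hgnn)
    have hlayQ : ∫ x, g x ∂Q = ∫ t in Set.Ioi 0, (Q {a : ℝ | t < g a}).toReal :=
      hgint2.integral_eq_integral_meas_lt (Eventually.of_forall hgnn)
    set f1 : ℝ → ℝ := fun t => (P {a : ℝ | t < g a}).toReal with hf1def
    set f2 : ℝ → ℝ := fun t => (Q {a : ℝ | t < g a}).toReal with hf2def
    have hanti1 : Antitone f1 := fun t s hts =>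
      ENNReal.toReal_mono (measure_ne_top _ _)
        (measure_mono fun x hx => lt_of_le_of_lt hts hx)
    have hanti2 : Antitone f2 := fun t s hts =>
      ENNReal.toReal_mono (measure_ne_top _ _)
        (measure_mono fun x hx => lt_of_le_of_lt hts hx)
    have hgle : ∀ x, g x ≤ L := by
      intro x
      rw [hgdef, Set.indicator_apply]
      split_ifs with hx
      · rcases le_or_gt 0 x with hx0 | hx0
        · exact hmono hx0 hA.le (by rw [Set.mem_setOf_eq, abs_of_nonneg hx0] at hx; linarith)
        · rw [← heven x]
          rw [Set.mem_setOf_eq, abs_of_neg hx0] at hx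
          exact hmono (neg_nonneg.mpr hx0.le) hA.le hx.le
      · exact hL0
    have hzero : ∀ t : ℝ, L ≤ t → {a : ℝ | t < g a} = ∅ := by
      intro t htL
      ext x
      simp only [Set.mem_setOf_eq, Set.mem_empty_iff_false, iff_false, not_lt]
      exact (hgle x).trans htL
    have hsetT : ∀ t : ℝ, 0 < t → {a : ℝ | t < g a} = {x : ℝ | |x| < A ∧ t < loss x} := by
      intro t ht
      ext x
      simp only [Set.mem_setOf_eq]
      rw [hgdef, Set.indicator_apply]
      split_ifs with hx
      · rw [Set.mem_setOf_eq] at hx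
        exact ⟨fun h' => ⟨hx, h'⟩, fun h' => h'.2⟩
      · rw [Set.mem_setOf_eq] at hx
        constructor
        · intro h'; linarith
        · intro h'; exact absurd h'.1 hx
    have hEqOn1 : Set.EqOn f1 ((Set.Ioc (0:ℝ) L).indicator f1) (Set.Ioi 0) := by
      intro t ht
      by_cases htL : t ≤ L
      · rw [Set.indicator_of_mem (Set.mem_Ioc.mpr ⟨ht, htL⟩)]
      · rw [Set.indicator_of_notMem (fun hmem => htL hmem.2)]
        show f1 t = 0
        rw [hf1def]
        simp only
        rw [hzero t (not_le.mp htL).le]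
        simp
    have hEqOn2 : Set.EqOn f2 ((Set.Ioc (0:ℝ) L).indicator f2) (Set.Ioi 0) := by
      intro t ht
      by_cases htL : t ≤ L
      · rw [Set.indicator_of_mem (Set.mem_Ioc.mpr ⟨ht, htL⟩)]
      · rw [Set.indicator_of_notMem (fun hmem => htL hmem.2)]
        show f2 t = 0
        rw [hf2def]
        simp only
        rw [hzero t (not_le.mp htL).le]
        simp
    have hIocP : ∫ t in Set.Ioi (0:ℝ), f1 t = ∫ t in Set.Ioc (0:ℝ) L, f1 t := by
      rw [setIntegral_congr_fun measurableSet_Ioi hEqOn1,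
        setIntegral_indicator measurableSet_Ioc,
        Set.inter_eq_self_of_subset_right (Set.Ioc_subset_Ioi_self)]
    have hIocQ : ∫ t in Set.Ioi (0:ℝ), f2 t = ∫ t in Set.Ioc (0:ℝ) L, f2 t := by
      rw [setIntegral_congr_fun measurableSet_Ioi hEqOn2,
        setIntegral_indicator measurableSet_Ioc,
        Set.inter_eq_self_of_subset_right (Set.Ioc_subset_Ioi_self)]
    have hbd1 : ∀ᵐ t ∂(volume.restrict (Set.Ioc (0:ℝ) L)), ‖f1 t‖ ≤ 1 := by
      refine Eventually.of_forall fun t => ?_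
      rw [Real.norm_eq_abs, abs_of_nonneg ENNReal.toReal_nonneg]
      simpa using ENNReal.toReal_mono ENNReal.one_ne_top prob_le_one
    have hbd2 : ∀ᵐ t ∂(volume.restrict (Set.Ioc (0:ℝ) L)), ‖f2 t‖ ≤ 1 := by
      refine Eventually.of_forall fun t => ?_
      rw [Real.norm_eq_abs, abs_of_nonneg ENNReal.toReal_nonneg]
      simpa using ENNReal.toReal_mono ENNReal.one_ne_top prob_le_one
    have hi1 : IntegrableOn f1 (Set.Ioc (0:ℝ) L) volume :=
      Measure.integrableOn_of_bounded measure_Ioc_lt_top.ne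
        hanti1.measurable.aestronglyMeasurable hbd1
    have hi2 : IntegrableOn f2 (Set.Ioc (0:ℝ) L) volume :=
      Measure.integrableOn_of_bounded measure_Ioc_lt_top.ne
        hanti2.measurable.aestronglyMeasurable hbd2
    rw [hlayP, hlayQ, hIocP, hIocQ, ← integral_sub hi1 hi2]
    have hpt : ∀ t ∈ Set.Ioc (0:ℝ) L, ‖f1 t - f2 t‖ ≤ 4 * D := by
      intro t htmem
      rw [Real.norm_eq_abs, hf1def, hf2def]
      simp only
      rw [hsetT t htmem.1]
      exact stmt4_aux_pointwise h loss h0 heven hmono A t htmem.1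
    calc ‖∫ t in Set.Ioc (0:ℝ) L, (f1 t - f2 t)‖
        ≤ (4 * D) * (volume (Set.Ioc (0:ℝ) L)).toReal :=
          norm_setIntegral_le_of_norm_le_const measure_Ioc_lt_top hpt
      _ = 4 * L * D := by
          rw [Real.volume_Ioc, sub_zero, ENNReal.toReal_ofReal hL0]; ring
  calc |(∫ x, loss x ∂P) - ∫ x, loss x ∂Q|
      = |((∫ x, g x ∂P) - ∫ x, g x ∂Q)
          + ((∫ x in {x : ℝ | A ≤ |x|}, loss x ∂P)
            - ∫ x in {x : ℝ | A ≤ |x|}, loss x ∂Q)| := by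
        rw [hgP, hgQ]
        congr 1
        linarith
    _ ≤ |(∫ x, g x ∂P) - ∫ x, g x ∂Q|
        + |(∫ x in {x : ℝ | A ≤ |x|}, loss x ∂P)
          - ∫ x in {x : ℝ | A ≤ |x|}, loss x ∂Q| := abs_add_le _ _
    _ ≤ 4 * loss A * D + ((∫ x in {x : ℝ | A ≤ |x|}, loss x ∂P)
          + ∫ x in {x : ℝ | A ≤ |x|}, loss x ∂Q) := by
        have habs2 : |(∫ x in {x : ℝ | A ≤ |x|}, loss x ∂P)
          - ∫ x in {x : ℝ | A ≤ |x|}, loss x ∂Q|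
            ≤ (∫ x in {x : ℝ | A ≤ |x|}, loss x ∂P)
              + ∫ x in {x : ℝ | A ≤ |x|}, loss x ∂Q := by
          rw [abs_sub_le_iff]; constructor <;> linarith
        linarith
    _ = 4 * loss A * D + (∫ x in {x : ℝ | A ≤ |x|}, loss x ∂P)
          + ∫ x in {x : ℝ | A ≤ |x|}, loss x ∂Q := by ring

end AuxStmt4

/-- Let `loss : ℝ → ℝ₊` be a loss function with `loss 0 = 0`, even,
nondecreasing and convex on `ℝ₊`. For random variables `ξ, η` (on possibly different
probability spaces) with Kolmogorov distance `Δ(ξ,η) := sup_x |P(ξ≤x) − P(η≤x)|` and any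
`A > 0`:
`|E loss(ξ) − E loss(η)| ≤ 4·loss(A)·Δ(ξ,η) + E[loss(ξ)·1{|ξ|≥A}] + E[loss(η)·1{|η|≥A}]`. -/
theorem stmt4 {Ω₁ Ω₂ : Type*} [MeasurableSpace Ω₁] [MeasurableSpace Ω₂]
    (μ : Measure Ω₁) (ν : Measure Ω₂) [IsProbabilityMeasure μ] [IsProbabilityMeasure ν]
    (ξ : Ω₁ → ℝ) (η : Ω₂ → ℝ) (hξ : Measurable ξ) (hη : Measurable η)
    (loss : ℝ → ℝ) (hnonneg : ∀ u, 0 ≤ loss u) (h0 : loss 0 = 0)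
    (heven : ∀ u, loss (-u) = loss u)
    (hmono : MonotoneOn loss (Set.Ici (0 : ℝ)))
    (hconv : ConvexOn ℝ (Set.Ici (0 : ℝ)) loss)
    (hint₁ : Integrable (fun ω => loss (ξ ω)) μ)
    (hint₂ : Integrable (fun ω => loss (η ω)) ν)
    (A : ℝ) (hA : 0 < A) :
    |(∫ ω, loss (ξ ω) ∂μ) - ∫ ω, loss (η ω) ∂ν|
      ≤ 4 * loss A * (⨆ x : ℝ, |(μ {ω | ξ ω ≤ x}).toReal - (ν {ω | η ω ≤ x}).toReal|)
        + (∫ ω in {ω | A ≤ |ξ ω|}, loss (ξ ω) ∂μ)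
        + ∫ ω in {ω | A ≤ |η ω|}, loss (η ω) ∂ν := by
  -- loss is measurable
  have hlossabs : ∀ x : ℝ, loss x = loss |x| := by
    intro x
    rcases le_or_gt 0 x with hx | hx
    · rw [abs_of_nonneg hx]
    · rw [abs_of_neg hx]; exact (heven x).symm
  have hmonom : Monotone fun u : ℝ => loss (max u 0) := by
    intro u v huv
    exact hmono (le_max_right u 0) (le_max_right v 0) (max_le_max huv le_rfl)
  have hm : Measurable loss := by
    have hfun : loss = (fun u : ℝ => loss (max u 0)) ∘ fun x : ℝ => |x| := by
      funext x
      simp only [Function.comp_apply]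
      rw [max_eq_left (abs_nonneg x), ← hlossabs]
    rw [hfun]
    exact hmonom.measurable.comp measurable_id.abs
  set P := μ.map ξ with hP
  set Q := ν.map η with hQ
  haveI : IsProbabilityMeasure P := Measure.isProbabilityMeasure_map hξ.aemeasurable
  haveI : IsProbabilityMeasure Q := Measure.isProbabilityMeasure_map hη.aemeasurable
  have hPIic : ∀ x : ℝ, P (Set.Iic x) = μ {ω | ξ ω ≤ x} := fun x =>
    Measure.map_apply hξ measurableSet_Iic
  have hQIic : ∀ x : ℝ, Q (Set.Iic x) = ν {ω | η ω ≤ x} := fun x =>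
    Measure.map_apply hη measurableSet_Iic
  set D := ⨆ x : ℝ, |(μ {ω | ξ ω ≤ x}).toReal - (ν {ω | η ω ≤ x}).toReal| with hD
  have hbdd : BddAbove (Set.range fun x : ℝ =>
      |(μ {ω | ξ ω ≤ x}).toReal - (ν {ω | η ω ≤ x}).toReal|) := by
    refine ⟨1, ?_⟩
    rintro y ⟨x, rfl⟩
    have ha : (μ {ω | ξ ω ≤ x}).toReal ≤ 1 := by
      simpa using ENNReal.toReal_mono ENNReal.one_ne_top prob_le_one
    have hb : (ν {ω | η ω ≤ x}).toReal ≤ 1 := by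
      simpa using ENNReal.toReal_mono ENNReal.one_ne_top prob_le_one
    have ha0 : 0 ≤ (μ {ω | ξ ω ≤ x}).toReal := ENNReal.toReal_nonneg
    have hb0 : 0 ≤ (ν {ω | η ω ≤ x}).toReal := ENNReal.toReal_nonneg
    rw [abs_sub_le_iff]
    constructor <;> linarith
  have hle : ∀ x : ℝ, |(P (Set.Iic x)).toReal - (Q (Set.Iic x)).toReal| ≤ D := by
    intro x
    rw [hPIic, hQIic]
    exact le_ciSup hbdd x
  have hintP : Integrable loss P :=
    (integrable_map_measure hm.aestronglyMeasurable hξ.aemeasurable).mpr hint₁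
  have hintQ : Integrable loss Q :=
    (integrable_map_measure hm.aestronglyMeasurable hη.aemeasurable).mpr hint₂
  have hsA : MeasurableSet {x : ℝ | A ≤ |x|} :=
    measurableSet_le measurable_const measurable_id.abs
  have hIP : ∫ ω, loss (ξ ω) ∂μ = ∫ x, loss x ∂P :=
    (integral_map hξ.aemeasurable hm.aestronglyMeasurable).symm
  have hIQ : ∫ ω, loss (η ω) ∂ν = ∫ x, loss x ∂Q :=
    (integral_map hη.aemeasurable hm.aestronglyMeasurable).symm
  have hTP : (∫ ω in {ω | A ≤ |ξ ω|}, loss (ξ ω) ∂μ) = ∫ x in {x : ℝ | A ≤ |x|}, loss x ∂P := by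
    rw [hP, setIntegral_map hsA hm.aestronglyMeasurable hξ.aemeasurable]
    rfl
  have hTQ : (∫ ω in {ω | A ≤ |η ω|}, loss (η ω) ∂ν) = ∫ x in {x : ℝ | A ≤ |x|}, loss x ∂Q := by
    rw [hQ, setIntegral_map hsA hm.aestronglyMeasurable hη.aemeasurable]
    rfl
  rw [hIP, hIQ, hTP, hTQ]
  exact stmt4_master hle loss hnonneg h0 heven hmono hm hintP hintQ A hA
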